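/- Let 0<p<∞ and φ:{2^k: k∈ℕ₀}→[0,∞) with φ(2^{k₀})≠0 for some k₀ and sup_{k} φ(2^k)2^{−kd/p} < ∞. Then there exists φ̃∈𝒢_p(𝔻) such that m_{φ,p}(ℤ^d) = m_{φ̃,p}(ℤ^d) with equivalence of (quasi-)norms. -/

import Mathlib

open ENNReal Filter

noncomputable section

/-- `Q_{0,k} ⊂ Q_{-j,m}` for dyadic cubes `Q_{-j,m} = 2^j([0,1)^d + m)`. -/
def inCube (d j : ℕ) (m k : Fin d → ℤ) : Prop :=
  ∀ i, 2 ^ j * m i ≤ k i ∧ k i < 2 ^ j * (m i + 1)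

/-- the local quantity `(Σ_{k : Q_{0,k} ⊂ Q_{-j,m}} |λ_k|^p)^{1/p}`, in `ℝ≥0∞`. -/
def localSum (d : ℕ) (p : ℝ) (j : ℕ) (m : Fin d → ℤ)
    (lam : (Fin d → ℤ) → ℂ) : ℝ≥0∞ :=
  (∑' k : {k : Fin d → ℤ // inCube d j m k}, ENNReal.ofReal ‖lam k.1‖ ^ p) ^ (1 / p)

/-- quasi-norm of the generalised Morrey sequence space `m_{φ,p}(ℤ^d)`;
`φ j` stands for `φ(2^j)`. -/
def mNorm (d : ℕ) (p : ℝ) (φ : ℕ → ℝ) (lam : (Fin d → ℤ) → ℂ) : ℝ≥0∞ :=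
  ⨆ (j : ℕ) (m : Fin d → ℤ),
    ENNReal.ofReal (φ j) * (2 : ℝ≥0∞) ^ (-((j : ℝ) * d) / p) * localSum d p j m lam

def ellpNorm (d : ℕ) (p : ℝ) (lam : (Fin d → ℤ) → ℂ) : ℝ≥0∞ :=
  (∑' k : Fin d → ℤ, ENNReal.ofReal ‖lam k‖ ^ p) ^ (1 / p)

def linftyNorm (d : ℕ) (lam : (Fin d → ℤ) → ℂ) : ℝ≥0∞ :=
  ⨆ k : Fin d → ℤ, ENNReal.ofReal ‖lam k‖

/-- the class `𝒢_p(𝔻)`: `φ(2^k)` is positive, nondecreasing and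
`2^{-kd/p} φ(2^k)` is nonincreasing. -/
def Gp (d : ℕ) (p : ℝ) (φ : ℕ → ℝ) : Prop :=
  (∀ k, 0 < φ k) ∧
  ∀ j k : ℕ, j ≤ k → φ j ≤ φ k ∧ φ k ≤ φ j * 2 ^ (((k : ℝ) - j) * d / p)

/-! ### auxiliary material -/

lemma inCube_up {d j n : ℕ} {m x : Fin d → ℤ} (h : inCube d j m x) :
    inCube d (j+n) (fun i => m i / 2^n) x := by
  intro i
  obtain ⟨h1, h2⟩ := h i
  have hn : (0:ℤ) < 2^n := by positivity
  have hdm := Int.mul_ediv_add_emod (m i) (2^n)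
  have hr1 := Int.emod_nonneg (m i) (ne_of_gt hn)
  have hr2 := Int.emod_lt_of_pos (m i) hn
  have e1 : (2:ℤ)^(j+n) * (m i / 2^n) = 2^j * (2^n * (m i / 2^n)) := by rw [pow_add]; ring
  have e2 : (2:ℤ)^(j+n) * (m i / 2^n + 1) = 2^j * (2^n * (m i / 2^n)) + 2^j * 2^n := by
    rw [pow_add]; ring
  have e3 : (2:ℤ)^j * (m i + 1) = 2^j * m i + 2^j := by ring
  have e4 : (2:ℤ)^j * m i = 2^j * (2^n * (m i / 2^n)) + 2^j * (m i % 2^n) := by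
    have := congrArg (fun z => (2:ℤ)^j * z) hdm
    simp only [mul_add] at this
    linarith [this]
  have hj : (0:ℤ) < 2^j := by positivity
  constructor
  · show (2:ℤ)^(j+n) * (m i / 2^n) ≤ x i
    nlinarith
  · show x i < (2:ℤ)^(j+n) * (m i / 2^n + 1)
    nlinarith

def cubeEquiv (d n : ℕ) (m : Fin d → ℤ) :
    {x : Fin d → ℤ // inCube d n m x} ≃ (Fin d → Fin (2^n)) where
  toFun x i := ⟨(x.1 i - 2^n * m i).toNat, by
    obtain ⟨h1, h2⟩ := x.2 i
    have hc : ((2^n : ℕ) : ℤ) = 2^n := by push_cast; ring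
    have e3 : (2:ℤ)^n * (m i + 1) = 2^n * m i + 2^n := by ring
    omega⟩
  invFun v := ⟨fun i => 2^n * m i + (v i : ℤ), by
    intro i
    have hv : ((v i : ℕ) : ℤ) < ((2^n : ℕ) : ℤ) := by exact_mod_cast (v i).2
    have hc : ((2^n : ℕ) : ℤ) = 2^n := by push_cast; ring
    have e3 : (2:ℤ)^n * (m i + 1) = 2^n * m i + 2^n := by ring
    have hv0 : (0:ℤ) ≤ ((v i : ℕ) : ℤ) := Int.natCast_nonneg _
    constructor
    · show (2:ℤ)^n * m i ≤ 2^n * m i + (v i : ℤ); omega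
    · show (2:ℤ)^n * m i + (v i : ℤ) < 2^n * (m i + 1); omega⟩
  left_inv x := by
    apply Subtype.ext; funext i
    simp only
    obtain ⟨h1, h2⟩ := x.2 i
    omega
  right_inv v := by
    funext i
    apply Fin.ext
    simp only [Fin.val_mk]
    omega

def splitEquiv (d k n : ℕ) (m : Fin d → ℤ) :
    {x : Fin d → ℤ // inCube d (k+n) m x} ≃
      Σ m' : {m' : Fin d → ℤ // inCube d n m m'}, {x : Fin d → ℤ // inCube d k m'.1 x} where
  toFun x := ⟨⟨fun i => x.1 i / 2^k, by
      intro i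
      obtain ⟨h1, h2⟩ := x.2 i
      have hk : (0:ℤ) < 2^k := by positivity
      constructor
      · show (2:ℤ)^n * m i ≤ x.1 i / 2^k
        rw [Int.le_ediv_iff_mul_le hk]
        have e : (2:ℤ)^n * m i * 2^k = 2^(k+n) * m i := by rw [pow_add]; ring
        linarith
      · show x.1 i / 2^k < (2:ℤ)^n * (m i + 1)
        rw [Int.ediv_lt_iff_lt_mul hk]
        have e : (2:ℤ)^n * (m i + 1) * 2^k = 2^(k+n) * (m i + 1) := by rw [pow_add]; ring
        linarith⟩,
    ⟨x.1, by
      intro i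
      have hk : (0:ℤ) < 2^k := by positivity
      have hdm := Int.mul_ediv_add_emod (x.1 i) (2^k)
      have hr1 := Int.emod_nonneg (x.1 i) (ne_of_gt hk)
      have hr2 := Int.emod_lt_of_pos (x.1 i) hk
      constructor
      · show (2:ℤ)^k * (x.1 i / 2^k) ≤ x.1 i; omega
      · show x.1 i < (2:ℤ)^k * (x.1 i / 2^k + 1)
        have : (2:ℤ)^k * (x.1 i / 2^k + 1) = 2^k * (x.1 i / 2^k) + 2^k := by ring
        omega⟩⟩
  invFun σ := ⟨σ.2.1, by
    intro i
    obtain ⟨h1, h2⟩ := σ.1.2 i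
    obtain ⟨h3, h4⟩ := σ.2.2 i
    have hk : (0:ℤ) < 2^k := by positivity
    have e : (2:ℤ)^(k+n) = 2^k * 2^n := pow_add 2 k n
    constructor
    · have : (2:ℤ)^k * (2^n * m i) ≤ 2^k * σ.1.1 i := by nlinarith
      calc (2:ℤ)^(k+n) * m i = 2^k * (2^n * m i) := by rw [e]; ring
        _ ≤ 2^k * σ.1.1 i := this
        _ ≤ σ.2.1 i := h3
    · have h4' : σ.1.1 i + 1 ≤ 2^n * (m i + 1) := h2
      have : (2:ℤ)^k * (σ.1.1 i + 1) ≤ 2^k * (2^n * (m i + 1)) := by nlinarith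
      calc σ.2.1 i < 2^k * (σ.1.1 i + 1) := h4
        _ ≤ 2^k * (2^n * (m i + 1)) := this
        _ = 2^(k+n) * (m i + 1) := by rw [e]; ring⟩
  left_inv x := rfl
  right_inv := fun ⟨⟨m', hm'⟩, ⟨x, hx⟩⟩ => by
    have hm : (fun i => x i / 2^k) = m' := by
      funext i
      obtain ⟨h3, h4⟩ := hx i
      have hk : (0:ℤ) < 2^k := by positivity
      have l1 : m' i ≤ x i / 2^k := by rw [Int.le_ediv_iff_mul_le hk]; linarith
      have l2 : x i / 2^k < m' i + 1 := by
        rw [Int.ediv_lt_iff_lt_mul hk]; linarith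
      omega
    subst hm
    rfl

lemma two_rpow_add (a b : ℝ) : (2:ℝ≥0∞) ^ (a + b) = 2 ^ a * 2 ^ b :=
  ENNReal.rpow_add a b (by norm_num) (by norm_num)

lemma two_rpow_cancel (a : ℝ) : (2:ℝ≥0∞) ^ a * 2 ^ (-a) = 1 := by
  rw [← two_rpow_add]; simp

lemma localSum_le_up {d : ℕ} {p : ℝ} (hp : 0 < p) (j n : ℕ) (m : Fin d → ℤ)
    (lam : (Fin d → ℤ) → ℂ) :
    localSum d p j m lam ≤ localSum d p (j+n) (fun i => m i / 2^n) lam := by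
  apply ENNReal.rpow_le_rpow _ (by positivity)
  exact tsum_mono_subtype (fun x => ENNReal.ofReal ‖lam x‖ ^ p)
    (fun x hx => inCube_up hx)

lemma localSum_split_le {d : ℕ} {p : ℝ} (hp : 0 < p) (k n : ℕ) (m : Fin d → ℤ)
    (lam : (Fin d → ℤ) → ℂ) {B : ℝ≥0∞}
    (hB : ∀ m' : Fin d → ℤ, localSum d p k m' lam ≤ B) :
    localSum d p (k+n) m lam ≤ (2:ℝ≥0∞) ^ (((n:ℝ) * d) / p) * B := by
  set f : (Fin d → ℤ) → ℝ≥0∞ := fun x => ENNReal.ofReal ‖lam x‖ ^ p with hf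
  have key : (∑' x : {x : Fin d → ℤ // inCube d (k+n) m x}, f x.1)
      = ∑' m' : {m' : Fin d → ℤ // inCube d n m m'},
          ∑' x : {x : Fin d → ℤ // inCube d k m'.1 x}, f x.1 := by
    rw [← Equiv.tsum_eq (splitEquiv d k n m).symm (fun x => f x.1)]
    rw [ENNReal.tsum_sigma' (fun σ => f (((splitEquiv d k n m).symm σ).1))]
    exact tsum_congr fun a => tsum_congr fun b => rfl
  have hsum : (∑' x : {x : Fin d → ℤ // inCube d (k+n) m x}, f x.1)
      ≤ (2:ℝ≥0∞) ^ (n * d) * B ^ p := by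
    rw [key]
    have hTB : ∀ m' : {m' : Fin d → ℤ // inCube d n m m'},
        (∑' x : {x : Fin d → ℤ // inCube d k m'.1 x}, f x.1) ≤ B ^ p := by
      intro m'
      have h1 : ((∑' x : {x : Fin d → ℤ // inCube d k m'.1 x}, f x.1) ^ (1/p)) ^ p ≤ B ^ p :=
        ENNReal.rpow_le_rpow (hB m'.1) hp.le
      rwa [← ENNReal.rpow_mul, one_div_mul_cancel hp.ne', ENNReal.rpow_one] at h1
    calc (∑' m' : {m' : Fin d → ℤ // inCube d n m m'},
            ∑' x : {x : Fin d → ℤ // inCube d k m'.1 x}, f x.1)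
        ≤ ∑' _ : {m' : Fin d → ℤ // inCube d n m m'}, B ^ p := ENNReal.tsum_le_tsum hTB
      _ = ∑' _ : (Fin d → Fin (2^n)), B ^ p :=
          Equiv.tsum_eq (cubeEquiv d n m) (fun _ => B ^ p)
      _ = (Fintype.card (Fin d → Fin (2^n))) * B ^ p := by
          rw [tsum_fintype]
          simp [Finset.sum_const, nsmul_eq_mul]
      _ = (2:ℝ≥0∞) ^ (n * d) * B ^ p := by
          rw [Fintype.card_fun]
          simp [Fintype.card_fin, ← pow_mul]
  calc localSum d p (k+n) m lam
      ≤ ((2:ℝ≥0∞) ^ (n * d) * B ^ p) ^ (1/p) :=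
        ENNReal.rpow_le_rpow hsum (by positivity)
    _ = (2:ℝ≥0∞) ^ (((n:ℝ) * d) / p) * B := by
        rw [ENNReal.mul_rpow_of_nonneg _ _ (by positivity),
          ← ENNReal.rpow_natCast 2 (n*d), ← ENNReal.rpow_mul, ← ENNReal.rpow_mul,
          mul_one_div_cancel hp.ne', ENNReal.rpow_one]
        congr 1
        push_cast
        ring

lemma two_rpow_ne_top (a : ℝ) : (2:ℝ≥0∞) ^ a ≠ ⊤ := by
  simp [ENNReal.rpow_eq_top_iff]

lemma two_rpow_ne_zero (a : ℝ) : (2:ℝ≥0∞) ^ a ≠ 0 :=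
  (ENNReal.rpow_pos (by norm_num) (by norm_num)).ne'

lemma two_rpow_cancel' (a b : ℝ) (h : a + b = 0) : (2:ℝ≥0∞) ^ a * 2 ^ b = 1 := by
  rw [← two_rpow_add, h, ENNReal.rpow_zero]

lemma ofReal_two_rpow (a : ℝ) : ENNReal.ofReal ((2:ℝ) ^ a) = (2:ℝ≥0∞) ^ a := by
  rw [← ENNReal.ofReal_rpow_of_pos (by norm_num : (0:ℝ) < 2), ENNReal.ofReal_ofNat]

/-- auxiliary family whose supremum over `i` is the regularised weight. -/
def gA (p : ℝ) (d : ℕ) (φ : ℕ → ℝ) (j i : ℕ) : ℝ :=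
  φ i * 2 ^ (-((i:ℝ) * d) / p) * 2 ^ (((min j i : ℕ) : ℝ) * d / p)

theorem stmt_7 (d : ℕ) (hd : 0 < d) (p : ℝ) (hp : 0 < p)
    (φ : ℕ → ℝ) (hφ : ∀ j, 0 ≤ φ j) (k₀ : ℕ) (hk₀ : φ k₀ ≠ 0)
    (hsup : ∃ C : ℝ, ∀ k : ℕ, φ k * (2 : ℝ) ^ (-((k : ℝ) * d) / p) ≤ C) :
    ∃ φt : ℕ → ℝ, Gp d p φt ∧
      ∃ c C : ℝ≥0∞, 0 < c ∧ C < ⊤ ∧ ∀ lam : (Fin d → ℤ) → ℂ,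
        c * mNorm d p φ lam ≤ mNorm d p φt lam ∧
        mNorm d p φt lam ≤ C * mNorm d p φ lam := by
  obtain ⟨C, hC⟩ := hsup
  have hq2 : (0:ℝ) < 2 := by norm_num
  have hd0 : (0:ℝ) ≤ (d:ℝ) := Nat.cast_nonneg d
  have hφk₀ : 0 < φ k₀ := lt_of_le_of_ne (hφ k₀) (Ne.symm hk₀)
  have hCpos : 0 < C :=
    lt_of_lt_of_le (mul_pos hφk₀ (Real.rpow_pos_of_pos hq2 _)) (hC k₀)
  have hbdd : ∀ j, BddAbove (Set.range (gA p d φ j)) := by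
    intro j
    refine ⟨C * 2 ^ ((j:ℝ) * d / p), ?_⟩
    rintro _ ⟨i, rfl⟩
    have h2 : (2:ℝ) ^ (((min j i : ℕ):ℝ) * d / p) ≤ 2 ^ ((j:ℝ) * d / p) := by
      apply Real.rpow_le_rpow_of_exponent_le one_le_two
      have hmc : ((min j i : ℕ):ℝ) ≤ (j:ℝ) := by exact_mod_cast Nat.min_le_left j i
      gcongr
    calc gA p d φ j i ≤ C * 2 ^ (((min j i:ℕ):ℝ) * d / p) :=
          mul_le_mul_of_nonneg_right (hC i) (Real.rpow_nonneg hq2.le _)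
      _ ≤ C * 2 ^ ((j:ℝ) * d / p) := mul_le_mul_of_nonneg_left h2 hCpos.le
  have gA_self : ∀ j i : ℕ, min j i = i → gA p d φ j i = φ i := by
    intro j i h
    unfold gA
    rw [h, mul_assoc, ← Real.rpow_add hq2,
      show -((i:ℝ)*d)/p + (i:ℝ)*d/p = 0 by ring, Real.rpow_zero, mul_one]
  have hφΦ : ∀ j, φ j ≤ ⨆ i, gA p d φ j i := by
    intro j
    have := le_ciSup (hbdd j) j
    rwa [gA_self j j (min_self j)] at this
  have hΦpos : ∀ j, 0 < ⨆ i, gA p d φ j i := by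
    intro j
    refine lt_of_lt_of_le ?_ (le_ciSup (hbdd j) k₀)
    exact mul_pos (mul_pos hφk₀ (Real.rpow_pos_of_pos hq2 _)) (Real.rpow_pos_of_pos hq2 _)
  have hgA_nonneg : ∀ j i, 0 ≤ gA p d φ j i := fun j i =>
    mul_nonneg (mul_nonneg (hφ i) (Real.rpow_nonneg hq2.le _)) (Real.rpow_nonneg hq2.le _)
  refine ⟨fun j => ⨆ i, gA p d φ j i, ⟨hΦpos, ?_⟩, 1, 1, zero_lt_one, one_lt_top, ?_⟩
  · -- monotonicity and doubling
    intro j k hjk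
    constructor
    · apply ciSup_le; intro i
      refine le_trans ?_ (le_ciSup (hbdd k) i)
      unfold gA
      apply mul_le_mul_of_nonneg_left ?_ (mul_nonneg (hφ i) (Real.rpow_nonneg hq2.le _))
      apply Real.rpow_le_rpow_of_exponent_le one_le_two
      have h1 : ((min j i:ℕ):ℝ) ≤ ((min k i:ℕ):ℝ) :=
        Nat.cast_le.mpr (by omega)
      gcongr
    · apply ciSup_le; intro i
      have h1 : min k i ≤ min j i + (k - j) := by omega
      have h2 : ((min k i:ℕ):ℝ) ≤ ((min j i + (k - j) : ℕ):ℝ) := Nat.cast_le.mpr h1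
      have h3 : ((min j i + (k - j) : ℕ):ℝ) = ((min j i:ℕ):ℝ) + ((k:ℝ) - j) := by
        push_cast [Nat.cast_sub hjk]
        ring
      have hcast : ((min k i:ℕ):ℝ) ≤ ((min j i:ℕ):ℝ) + ((k:ℝ) - j) := h3 ▸ h2
      have h2exp : (2:ℝ) ^ (((min k i:ℕ):ℝ) * d / p)
          ≤ 2 ^ (((min j i:ℕ):ℝ) * d / p) * 2 ^ (((k:ℝ) - j) * d / p) := by
        rw [← Real.rpow_add hq2]
        apply Real.rpow_le_rpow_of_exponent_le one_le_two
        rw [← add_div, ← add_mul]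
        gcongr
      calc gA p d φ k i
          = φ i * 2 ^ (-((i:ℝ)*d)/p) * 2 ^ (((min k i:ℕ):ℝ) * d / p) := rfl
        _ ≤ φ i * 2 ^ (-((i:ℝ)*d)/p)
              * (2 ^ (((min j i:ℕ):ℝ) * d / p) * 2 ^ (((k:ℝ) - j) * d / p)) :=
            mul_le_mul_of_nonneg_left h2exp (mul_nonneg (hφ i) (Real.rpow_nonneg hq2.le _))
        _ = gA p d φ j i * 2 ^ (((k:ℝ) - j) * d / p) := by unfold gA; ring
        _ ≤ (⨆ i', gA p d φ j i') * 2 ^ (((k:ℝ) - j) * d / p) :=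
            mul_le_mul_of_nonneg_right (le_ciSup (hbdd j) i) (Real.rpow_nonneg hq2.le _)
  · intro lam
    have hle : ∀ (ψ : ℕ → ℝ) (j : ℕ) (m' : Fin d → ℤ),
        ENNReal.ofReal (ψ j) * (2:ℝ≥0∞) ^ (-((j:ℝ)*d)/p) * localSum d p j m' lam
          ≤ mNorm d p ψ lam := by
      intro ψ j m'
      exact le_iSup_of_le j (le_iSup
        (fun m'' => ENNReal.ofReal (ψ j) * (2:ℝ≥0∞) ^ (-((j:ℝ)*d)/p) * localSum d p j m'' lam) m')
    constructor
    · rw [one_mul]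
      apply iSup_le; intro j; apply iSup_le; intro m
      refine le_trans ?_ (hle _ j m)
      gcongr
      exact hφΦ j
    · rw [one_mul]
      apply iSup_le; intro j; apply iSup_le; intro m
      have hofΦ : ENNReal.ofReal (⨆ i, gA p d φ j i)
          = ⨆ i, ENNReal.ofReal (gA p d φ j i) :=
        Monotone.map_ciSup_of_continuousAt (ENNReal.continuous_ofReal.continuousAt)
          (fun a b h => ENNReal.ofReal_le_ofReal h) (hbdd j)
      rw [hofΦ, ENNReal.iSup_mul, ENNReal.iSup_mul]
      apply iSup_le; intro i
      rcases le_total i j with hij | hij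
      · -- i ≤ j
        obtain ⟨n, rfl⟩ : ∃ n, j = i + n := ⟨j - i, by omega⟩
        rw [gA_self (i+n) i (min_eq_right (Nat.le_add_right i n))]
        by_cases hM : mNorm d p φ lam = ⊤
        · rw [hM]; exact le_top
        by_cases hφi : φ i = 0
        · simp [hφi]
        have hφipos : 0 < φ i := lt_of_le_of_ne (hφ i) (Ne.symm hφi)
        set c0 : ℝ≥0∞ := ENNReal.ofReal (φ i) * (2:ℝ≥0∞) ^ (-((i:ℝ)*d)/p) with hc0def
        have hc00 : c0 ≠ 0 := by
          apply mul_ne_zero _ (two_rpow_ne_zero _)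
          simp only [ne_eq, ENNReal.ofReal_eq_zero, not_le]
          exact hφipos
        have hc0t : c0 ≠ ⊤ := ENNReal.mul_ne_top ENNReal.ofReal_ne_top (two_rpow_ne_top _)
        have hB : ∀ m' : Fin d → ℤ, localSum d p i m' lam ≤ mNorm d p φ lam / c0 := by
          intro m'
          rw [ENNReal.le_div_iff_mul_le (Or.inl hc00) (Or.inl hc0t)]
          calc localSum d p i m' lam * c0
              = ENNReal.ofReal (φ i) * (2:ℝ≥0∞) ^ (-((i:ℝ)*d)/p) * localSum d p i m' lam := by
                rw [hc0def]; ring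
            _ ≤ mNorm d p φ lam := hle φ i m'
        have hLS := localSum_split_le hp i n m lam hB
        have hered : (2:ℝ≥0∞) ^ (-((↑(i+n):ℝ)*d)/p)
            = 2 ^ (-((i:ℝ)*d)/p) * 2 ^ (-((n:ℝ)*d)/p) := by
          rw [← two_rpow_add]; congr 1; push_cast; ring
        calc ENNReal.ofReal (φ i) * (2:ℝ≥0∞) ^ (-((↑(i+n):ℝ)*d)/p) * localSum d p (i+n) m lam
            = c0 * 2 ^ (-((n:ℝ)*d)/p) * localSum d p (i+n) m lam := by
              rw [hered, hc0def]; ring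
          _ ≤ c0 * 2 ^ (-((n:ℝ)*d)/p) * ((2:ℝ≥0∞) ^ (((n:ℝ)*d)/p) * (mNorm d p φ lam / c0)) := by
              exact mul_le_mul_right hLS _
          _ = c0 * (mNorm d p φ lam / c0) * ((2:ℝ≥0∞) ^ (((n:ℝ)*d)/p) * 2 ^ (-((n:ℝ)*d)/p)) := by
              ring
          _ = mNorm d p φ lam := by
              rw [two_rpow_cancel' _ _ (by ring), mul_one, ENNReal.mul_div_cancel hc00 hc0t]
      · -- j ≤ i
        obtain ⟨n, rfl⟩ : ∃ n, i = j + n := ⟨i - j, by omega⟩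
        have hmin : min j (j+n) = j := min_eq_left (Nat.le_add_right j n)
        have hof : ENNReal.ofReal (gA p d φ j (j+n))
            = ENNReal.ofReal (φ (j+n)) * (2:ℝ≥0∞) ^ (-((↑(j+n):ℝ)*d)/p)
              * (2:ℝ≥0∞) ^ ((j:ℝ)*d/p) := by
          unfold gA
          rw [hmin, ENNReal.ofReal_mul (mul_nonneg (hφ _) (Real.rpow_nonneg hq2.le _)),
            ENNReal.ofReal_mul (hφ _), ofReal_two_rpow, ofReal_two_rpow]
        calc ENNReal.ofReal (gA p d φ j (j+n)) * (2:ℝ≥0∞) ^ (-((j:ℝ)*d)/p) * localSum d p j m lam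
            = ENNReal.ofReal (φ (j+n)) * (2:ℝ≥0∞) ^ (-((↑(j+n):ℝ)*d)/p) * localSum d p j m lam
              * ((2:ℝ≥0∞) ^ ((j:ℝ)*d/p) * 2 ^ (-((j:ℝ)*d)/p)) := by rw [hof]; ring
          _ = ENNReal.ofReal (φ (j+n)) * (2:ℝ≥0∞) ^ (-((↑(j+n):ℝ)*d)/p)
              * localSum d p j m lam := by
              rw [two_rpow_cancel' _ _ (by ring), mul_one]
          _ ≤ ENNReal.ofReal (φ (j+n)) * (2:ℝ≥0∞) ^ (-((↑(j+n):ℝ)*d)/p)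
              * localSum d p (j+n) (fun i' => m i' / 2^n) lam :=
              mul_le_mul_right (localSum_le_up hp j n m lam) _
          _ ≤ mNorm d p φ lam := hle φ (j+n) _
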